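/- Suppose additionally that h_0 is a unit in R. Then for j = 1, 2, 3 one has c_{p−j} = −h_0^{−(p−1)/2} · (V_0 · M_1 · M_2 ⋯ M_{p−1})_{9−j}; that is, the vector (c_{p−1}, c_{p−2}, c_{p−3}) equals the last three entries, in reversed order, of the row vector −h_0^{−(p−1)/2} · V_0 · M_1 · M_2 ⋯ M_{p−1}. -/

import Mathlib

open Polynomial

/-- The 8×8 matrix `M_k` attached to a polynomial `h` of degree at most 8:
its only nonzero entries are the subdiagonal entries `(M_k)_{i+1,i} = 2k·h_0`
and the last-column entries `(M_k)_{i,8} = ((9−i) − 2k)·h_{9−i}` (1-indexed). -/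
def Mmat {R : Type*} [CommRing R] (h : Polynomial R) (k : ℕ) :
    Matrix (Fin 8) (Fin 8) R :=
  Matrix.of fun i j =>
    (if (i : ℕ) = (j : ℕ) + 1 then ((2 * (k : ℤ) : ℤ) : R) * h.coeff 0 else 0) +
    (if (j : ℕ) = 7 then
      (((8 - (i : ℕ) : ℤ) - 2 * (k : ℤ) : ℤ) : R) * h.coeff (8 - (i : ℕ)) else 0)

/-- The row vector `V_0 = (0,0,0,0,0,0,0,1)`. -/
def V0 {R : Type*} [CommRing R] : Fin 8 → R := fun i => if (i : ℕ) = 7 then 1 else 0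

/-- Integer-indexed coefficients of a polynomial (zero at negative indices). -/
noncomputable def Cz {R : Type*} [CommRing R] (f : Polynomial R) (z : ℤ) : R :=
  if z < 0 then 0 else f.coeff z.toNat

lemma Cz_neg {R : Type*} [CommRing R] (f : Polynomial R) {z : ℤ} (hz : z < 0) : Cz f z = 0 :=
  if_pos hz

lemma Cz_natCast {R : Type*} [CommRing R] (f : Polynomial R) (k : ℕ) : Cz f (k : ℤ) = f.coeff k := by
  simp [Cz]

lemma key {R : Type*} [CommRing R] (p : ℕ) (hp : p.Prime) (hodd : p ≠ 2) [CharP R p]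
    (h : Polynomial R) (hdeg : h.natDegree ≤ 8) (m : ℕ) (hm : 1 ≤ m) :
    ∑ t ∈ Finset.range 9, ((2*(m:ℤ) - (t:ℤ) : ℤ) : R) * h.coeff t * Cz (h ^ ((p-1)/2)) ((m:ℤ) - (t:ℤ)) = 0 := by
  have hp3 : 3 ≤ p := by
    rcases hp.two_le.lt_or_eq with h'|h'
    · omega
    · omega
  obtain ⟨k, hk⟩ := hp.odd_of_ne_two hodd
  set n := (p-1)/2 with hn
  have hn1 : 1 ≤ n := by omega
  have h2n : 2*n + 1 = p := by omega
  set f := h ^ n with hf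
  have hhh : h * h^(n-1) = h^n := by
    rw [← pow_succ']; congr 1; omega
  have hder : h * derivative f = C (n:R) * (derivative h * f) := by
    calc h * derivative (h^n) = h * (C (n:R) * h^(n-1) * derivative h) := by rw [derivative_pow]
      _ = C (n:R) * (derivative h * (h * h^(n-1))) := by ring
      _ = C (n:R) * (derivative h * h^n) := by rw [hhh]
  have e1 : ∑ t ∈ Finset.range 9, ((2*(m:ℤ) - (t:ℤ) : ℤ) : R) * h.coeff t * Cz f ((m:ℤ) - (t:ℤ))
      = ∑ t ∈ Finset.range (m+9), ((2*(m:ℤ) - (t:ℤ) : ℤ) : R) * h.coeff t * Cz f ((m:ℤ) - (t:ℤ)) := by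
    apply Finset.sum_subset (Finset.range_subset_range.mpr (by omega))
    intro t _ ht
    rw [Finset.mem_range, not_lt] at ht
    rw [coeff_eq_zero_of_natDegree_lt (by omega)]
    ring
  have e2 : ∑ t ∈ Finset.range (m+9), ((2*(m:ℤ) - (t:ℤ) : ℤ) : R) * h.coeff t * Cz f ((m:ℤ) - (t:ℤ))
      = ∑ t ∈ Finset.range (m+1), ((2*(m:ℤ) - (t:ℤ) : ℤ) : R) * h.coeff t * Cz f ((m:ℤ) - (t:ℤ)) := by
    symm
    apply Finset.sum_subset (Finset.range_subset_range.mpr (by omega))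
    intro t _ ht
    rw [Finset.mem_range, not_lt] at ht
    rw [Cz_neg f (by omega : (m:ℤ) - (t:ℤ) < 0)]
    ring
  rw [e1, e2]
  have e3 : ∑ t ∈ Finset.range (m+1), ((2*(m:ℤ) - (t:ℤ) : ℤ) : R) * h.coeff t * Cz f ((m:ℤ) - (t:ℤ))
      = ∑ t ∈ Finset.range (m+1), (2 * (((m - t : ℕ):R)) + (t:R)) * h.coeff t * f.coeff (m - t) := by
    apply Finset.sum_congr rfl
    intro t ht
    rw [Finset.mem_range] at ht
    have htm : t ≤ m := by omega
    have : (m:ℤ) - (t:ℤ) = ((m - t : ℕ) : ℤ) := by omega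
    rw [this, Cz_natCast]
    congr 1
    congr 1
    push_cast [Nat.cast_sub htm]
    ring
  rw [e3]
  set A := ∑ t ∈ Finset.range (m+1), ((m - t : ℕ):R) * h.coeff t * f.coeff (m - t) with hA
  set B := ∑ t ∈ Finset.range (m+1), ((t : ℕ):R) * h.coeff t * f.coeff (m - t) with hB
  have esplit : ∑ t ∈ Finset.range (m+1), (2 * (((m - t : ℕ):R)) + (t:R)) * h.coeff t * f.coeff (m - t)
      = 2 * A + B := by
    rw [hA, hB, Finset.mul_sum, ← Finset.sum_add_distrib]
    apply Finset.sum_congr rfl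
    intro t _
    ring
  rw [esplit]
  have hAco : A = (h * derivative f).coeff (m-1) := by
    rw [coeff_mul, Finset.Nat.sum_antidiagonal_eq_sum_range_succ_mk]
    have hm1 : m - 1 + 1 = m := by omega
    rw [Nat.succ_eq_add_one, hm1, hA, Finset.sum_range_succ]
    simp only
    simp only [Nat.sub_self, Nat.cast_zero, zero_mul, add_zero]
    apply Finset.sum_congr rfl
    intro t ht
    rw [Finset.mem_range] at ht
    rw [coeff_derivative]
    have e4 : m - 1 - t + 1 = m - t := by omega
    have e5 : ((m - t : ℕ) : R) = ((m - 1 - t : ℕ) : R) + 1 := by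
      rw [← e4]; push_cast; ring
    rw [e4, e5]; ring
  have hBco : (n : R) * B = (C (n:R) * (derivative h * f)).coeff (m-1) := by
    rw [coeff_C_mul, coeff_mul, Finset.Nat.sum_antidiagonal_eq_sum_range_succ_mk]
    have hm1 : m - 1 + 1 = m := by omega
    rw [Nat.succ_eq_add_one, hm1, hB, Finset.sum_range_succ']
    simp only
    simp only [Nat.cast_zero, zero_mul, add_zero]
    congr 1
    apply Finset.sum_congr rfl
    intro t ht
    rw [Finset.mem_range] at ht
    rw [coeff_derivative]
    have e4 : m - (t+1) = m - 1 - t := by omega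
    rw [e4]
    push_cast
    ring
  have hAB : A = (n:R) * B := by rw [hAco, hBco, hder]
  rw [hAB]
  have hpz : ((2*n+1 : ℕ) : R) = 0 := by rw [h2n]; exact CharP.cast_eq_zero R p
  push_cast at hpz
  calc 2 * ((n:R) * B) + B = (2*(n:R)+1) * B := by ring
    _ = 0 := by rw [hpz]; ring

lemma step {R : Type*} [CommRing R] (p : ℕ) (hp : p.Prime) (hodd : p ≠ 2) [CharP R p]
    (h : Polynomial R) (hdeg : h.natDegree ≤ 8) (m : ℕ) :
    Matrix.vecMul (fun i : Fin 8 => Cz (h ^ ((p-1)/2)) ((m:ℤ) + (i:ℕ) - 7)) (Mmat h (m+1))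
      = fun i : Fin 8 => ((2*((m:ℤ)+1) : ℤ) : R) * h.coeff 0 * Cz (h ^ ((p-1)/2)) (((m:ℤ)+1) + (i:ℕ) - 7) := by
  have hk := key p hp hodd h hdeg (m+1) (by omega)
  set f := h ^ ((p-1)/2) with hf
  simp only [Finset.sum_range_succ, Finset.sum_range_zero, zero_add] at hk
  push_cast at hk
  ring_nf at hk
  funext j
  simp only [Matrix.vecMul, dotProduct, Mmat, Matrix.of_apply, Fin.sum_univ_eight]
  fin_cases j <;>
    · norm_num [show ((0:Fin 8):ℕ) = 0 from rfl, show ((1:Fin 8):ℕ) = 1 from rfl,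
        show ((2:Fin 8):ℕ) = 2 from rfl, show ((3:Fin 8):ℕ) = 3 from rfl,
        show ((4:Fin 8):ℕ) = 4 from rfl, show ((5:Fin 8):ℕ) = 5 from rfl,
        show ((6:Fin 8):ℕ) = 6 from rfl, show ((7:Fin 8):ℕ) = 7 from rfl]
      push_cast
      try ring_nf
      try ring_nf
      try linear_combination -hk

lemma vecMul_mulconst {R : Type*} [CommRing R] (c : R) (w : Fin 8 → R)
    (M : Matrix (Fin 8) (Fin 8) R) :
    Matrix.vecMul (fun i => c * w i) M = fun j => c * Matrix.vecMul w M j := by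
  funext j
  simp [Matrix.vecMul, dotProduct, Finset.mul_sum, mul_assoc]

lemma prodlem {R : Type*} [CommRing R] (p : ℕ) (hp : p.Prime) (hodd : p ≠ 2) [CharP R p]
    (h : Polynomial R) (hdeg : h.natDegree ≤ 8) (N : ℕ) :
    Matrix.vecMul (fun i : Fin 8 => Cz (h ^ ((p-1)/2)) (((0:ℕ):ℤ) + (i:ℕ) - 7))
        (((List.range N).map (fun k => Mmat h (k+1))).prod)
      = fun i : Fin 8 => (∏ k ∈ Finset.range N, ((2*((k:ℤ)+1) : ℤ) : R) * h.coeff 0) *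
          Cz (h ^ ((p-1)/2)) ((N:ℤ) + (i:ℕ) - 7) := by
  induction N with
  | zero =>
    funext i
    simp [Matrix.vecMul_one]
  | succ N ih =>
    rw [List.range_succ, List.map_append, List.prod_append, List.map_singleton,
      List.prod_singleton, ← Matrix.vecMul_vecMul, ih, vecMul_mulconst,
      step p hp hodd h hdeg N]
    funext i
    beta_reduce
    rw [Finset.prod_range_succ,
      show ((N:ℤ)+1) + ((i:ℕ):ℤ) - 7 = ((N+1:ℕ):ℤ) + ((i:ℕ):ℤ) - 7 by push_cast; ring]
    ring

theorem coeff_eq_neg_inv_pow_mul_prod_entry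
    {R : Type*} [CommRing R] (p : ℕ) (hp : p.Prime) (hodd : p ≠ 2) [CharP R p]
    (h : Polynomial R) (hdeg : h.natDegree ≤ 8)
    (u : Rˣ) (hu : (u : R) = h.coeff 0) :
    ∀ (j : ℕ), ∀ (hj1 : 1 ≤ j) (hj2 : j ≤ 3),
      (h ^ ((p - 1) / 2)).coeff (p - j) =
        -(((u⁻¹ : Rˣ) : R) ^ ((p - 1) / 2)) *
          Matrix.vecMul V0 (((List.range (p - 1)).map (fun k => Mmat h (k + 1))).prod)
            ⟨8 - j, by omega⟩ := by
  intro j hj1 hj2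
  have hp3 : 3 ≤ p := by
    rcases hp.two_le.lt_or_eq with h'|h'
    · omega
    · omega
  obtain ⟨kk, hkk⟩ := hp.odd_of_ne_two hodd
  set n := (p-1)/2 with hn
  have h2n : 2*n = p - 1 := by omega
  set f := h ^ n with hf
  haveI := Fact.mk hp
  -- V0 in terms of Cz
  have hinv : ((u⁻¹ : Rˣ) : R) * (u : R) = 1 := by
    rw [← Units.val_mul, inv_mul_cancel u, Units.val_one]
  have hc0 : f.coeff 0 = (h.coeff 0)^n := by
    simp [hf, coeff_zero_eq_eval_zero]
  have hV : (V0 : Fin 8 → R) = fun i : Fin 8 => ((u⁻¹ : Rˣ) : R)^n * Cz f (((0:ℕ):ℤ) + (i:ℕ) - 7) := by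
    funext i
    fin_cases i <;>
      simp [V0, Cz, hc0, ← hu, ← mul_pow, hinv]
  rw [hV, vecMul_mulconst, prodlem p hp hodd h hdeg (p-1)]
  -- evaluate the product of scalars
  have hstep : ∀ k:ℕ, (((2*((k:ℤ)+1)) : ℤ) : R) * h.coeff 0 = ((2*(k+1) : ℕ) : R) * h.coeff 0 := by
    intro k; push_cast; ring
  have hP : (∏ k ∈ Finset.range (p-1), (((2*((k:ℤ)+1)) : ℤ) : R) * h.coeff 0)
      = ((2^(p-1) * Nat.factorial (p-1) : ℕ) : R) * (h.coeff 0)^(p-1) := by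
    rw [Finset.prod_congr rfl (fun k _ => hstep k), Finset.prod_mul_distrib, Finset.prod_const,
      Finset.card_range]
    congr 1
    rw [← Nat.cast_prod]
    congr 1
    rw [Finset.prod_mul_distrib, Finset.prod_const, Finset.card_range,
      Finset.prod_range_add_one_eq_factorial]
  have hW : ((2^(p-1) * Nat.factorial (p-1) : ℕ) : R) = -1 := by
    have h2 : ((2 : ZMod p)) ≠ 0 := by
      intro h2
      have h3 : ((2:ℕ) : ZMod p) = 0 := by exact_mod_cast h2
      have hd := (ZMod.natCast_eq_zero_iff 2 p).mp h3
      exact hodd ((Nat.prime_dvd_prime_iff_eq hp Nat.prime_two).mp hd)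
    have hz : ((2^(p-1) * Nat.factorial (p-1) : ℕ) : ZMod p) = -1 := by
      rw [Nat.cast_mul, Nat.cast_pow, Nat.cast_ofNat, ZMod.pow_card_sub_one_eq_one h2,
        one_mul, ZMod.wilsons_lemma]
    calc ((2^(p-1) * Nat.factorial (p-1) : ℕ) : R)
        = (ZMod.castHom (dvd_refl p) R) ((2^(p-1) * Nat.factorial (p-1) : ℕ) : ZMod p) := by
          rw [map_natCast]
      _ = (ZMod.castHom (dvd_refl p) R) (-1) := by rw [hz]
      _ = -1 := by rw [map_neg, map_one]
  -- the Cz value at the relevant index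
  have hidx : ((⟨8 - j, by omega⟩ : Fin 8) : ℕ) = 8 - j := rfl
  have harg : ((p-1:ℕ):ℤ) + ((8 - j : ℕ):ℤ) - 7 = ((p - j : ℕ) : ℤ) := by omega
  have hCz : Cz f (((p-1:ℕ):ℤ) + ((8 - j : ℕ):ℤ) - 7) = f.coeff (p - j) := by
    rw [harg, Cz_natCast]
  -- final computation
  simp only [hidx]
  rw [hP, hW, hCz]
  have hone : ((u⁻¹ : Rˣ) : R)^n * (((u⁻¹ : Rˣ) : R)^n * (h.coeff 0)^(p-1)) = 1 := by
    rw [← hu, ← mul_assoc, ← pow_add]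
    have : n + n = p - 1 := by omega
    rw [this, ← mul_pow, hinv, one_pow]
  calc f.coeff (p - j)
      = (((u⁻¹ : Rˣ) : R)^n * (((u⁻¹ : Rˣ) : R)^n * (h.coeff 0)^(p-1))) * f.coeff (p - j) := by
        rw [hone, one_mul]
    _ = -((u⁻¹ : Rˣ) : R)^n *
        (((u⁻¹ : Rˣ) : R)^n * ((-1) * (h.coeff 0)^(p-1) * f.coeff (p - j))) := by ring
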